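/- A boundary vertex x of degree at least 3 with nonnegative curvature in a semiplanar graph with boundary has pattern among (3,3), (3,4), (3,5), (3,6), (4,4), (3,3,3), with corresponding curvatures 1/6, 1/12, 1/30, 0, 0, 0. -/

import Mathlib

lemma sum_recip_le (l : List ℕ) (hd : ∀ d ∈ l, 3 ≤ d) :
    (l.map fun d => (1:ℚ)/(d:ℚ)).sum ≤ (l.length : ℚ) / 3 := by
  induction l with
  | nil => simp
  | cons a t ih =>
    have ha : 3 ≤ a := hd a (by simp)
    have h1 : (1:ℚ)/(a:ℚ) ≤ 1/3 := by
      apply one_div_le_one_div_of_le (by norm_num)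
      exact_mod_cast ha
    have h2 := ih (fun d hdm => hd d (by simp [hdm]))
    simp only [List.bind_eq_flatMap, List.flatMap_cons, List.flatMap_nil, List.pure_def,
      List.map_append, List.sum_append, List.map_cons, List.map_nil, List.sum_cons,
      List.sum_nil, List.append_nil, add_zero, List.length_cons, Nat.cast_add, Nat.cast_one] at h2 ⊢
    linarith

/-- A boundary vertex of degree n ≥ 3 (incident to n-1 faces, degrees listed
in nondecreasing order) with nonnegative curvature has pattern among
(3,3), (3,4), (3,5), (3,6), (4,4), (3,3,3), with curvatures
1/6, 1/12, 1/30, 0, 0, 0 respectively. -/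
theorem stmt_14 (n : ℕ) (hn : 3 ≤ n) (l : List ℕ) (hlen : l.length = n - 1)
    (hsort : l.Pairwise (· ≤ ·)) (hd : ∀ d ∈ l, 3 ≤ d)
    (Φ : ℚ) (hΦ : Φ = 1 - (n:ℚ)/2 + (l.map fun d => (1:ℚ)/(d:ℚ)).sum)
    (hnn : 0 ≤ Φ) :
    (l = [3,3] ∧ Φ = 1/6) ∨ (l = [3,4] ∧ Φ = 1/12) ∨
    (l = [3,5] ∧ Φ = 1/30) ∨ (l = [3,6] ∧ Φ = 0) ∨
    (l = [4,4] ∧ Φ = 0) ∨ (l = [3,3,3] ∧ Φ = 0) := by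
  have hkey := sum_recip_le l hd
  have hlc : (l.length : ℚ) = (n : ℚ) - 1 := by
    rw [hlen]; push_cast [Nat.cast_sub (by omega : 1 ≤ n)]; ring
  have hn4 : n ≤ 4 := by
    by_contra h
    push_neg at h
    have : (5:ℚ) ≤ (n:ℚ) := by exact_mod_cast h
    rw [hlc] at hkey
    linarith [hΦ ▸ hnn]
  interval_cases n
  · -- n = 3, length 2
    have h2 : l.length = 2 := by omega
    obtain ⟨a, b, rfl⟩ := List.length_eq_two.mp h2
    have ha : 3 ≤ a := hd a (by simp)
    have hb : 3 ≤ b := hd b (by simp)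
    have hab : a ≤ b := by
      simpa [List.pairwise_cons] using hsort
    have haq : (3:ℚ) ≤ (a:ℚ) := by exact_mod_cast ha
    have hbq : (3:ℚ) ≤ (b:ℚ) := by exact_mod_cast hb
    have habq : (a:ℚ) ≤ (b:ℚ) := by exact_mod_cast hab
    simp only [List.bind_eq_flatMap, List.flatMap_cons, List.flatMap_nil, List.pure_def,
      List.map_append, List.sum_append, List.map_cons, List.map_nil, List.sum_cons,
      List.sum_nil, List.append_nil, add_zero] at hΦ
    have hba : (1:ℚ)/(b:ℚ) ≤ 1/(a:ℚ) :=
      one_div_le_one_div_of_le (by linarith) habq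
    have ha4 : a ≤ 4 := by
      by_contra h
      push_neg at h
      have : (5:ℚ) ≤ (a:ℚ) := by exact_mod_cast h
      have h1 : (1:ℚ)/(a:ℚ) ≤ 1/5 := one_div_le_one_div_of_le (by norm_num) this
      subst hΦ
      push_cast at hnn
      linarith
    interval_cases a
    · -- a = 3
      have hb6 : b ≤ 6 := by
        by_contra h
        push_neg at h
        have : (7:ℚ) ≤ (b:ℚ) := by exact_mod_cast h
        have h1 : (1:ℚ)/(b:ℚ) ≤ 1/7 := one_div_le_one_div_of_le (by norm_num) this
        subst hΦ
        push_cast at hnn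
        norm_num at hnn
        rw [one_div] at h1
        linarith
      interval_cases b <;> subst hΦ <;> norm_num
    · -- a = 4
      have hb4 : b ≤ 4 := by
        by_contra h
        push_neg at h
        have : (5:ℚ) ≤ (b:ℚ) := by exact_mod_cast h
        have h1 : (1:ℚ)/(b:ℚ) ≤ 1/5 := one_div_le_one_div_of_le (by norm_num) this
        subst hΦ
        push_cast at hnn
        norm_num at hnn
        rw [one_div] at h1
        linarith
      interval_cases b <;> subst hΦ <;> norm_num
  · -- n = 4, length 3
    have h3 : l.length = 3 := by omega
    obtain ⟨a, b, c, rfl⟩ := List.length_eq_three.mp h3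
    have ha : 3 ≤ a := hd a (by simp)
    have hb : 3 ≤ b := hd b (by simp)
    have hc : 3 ≤ c := hd c (by simp)
    have haq : (3:ℚ) ≤ (a:ℚ) := by exact_mod_cast ha
    have hbq : (3:ℚ) ≤ (b:ℚ) := by exact_mod_cast hb
    have hcq : (3:ℚ) ≤ (c:ℚ) := by exact_mod_cast hc
    have h1 : (1:ℚ)/(a:ℚ) ≤ 1/3 := one_div_le_one_div_of_le (by norm_num) haq
    have h2 : (1:ℚ)/(b:ℚ) ≤ 1/3 := one_div_le_one_div_of_le (by norm_num) hbq
    have h3' : (1:ℚ)/(c:ℚ) ≤ 1/3 := one_div_le_one_div_of_le (by norm_num) hcq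
    simp only [List.bind_eq_flatMap, List.flatMap_cons, List.flatMap_nil, List.pure_def,
      List.map_append, List.sum_append, List.map_cons, List.map_nil, List.sum_cons,
      List.sum_nil, List.append_nil, add_zero] at hΦ
    have ha3 : a = 3 := by
      by_contra h
      have : (4:ℚ) ≤ (a:ℚ) := by exact_mod_cast (by omega : 4 ≤ a)
      have : (1:ℚ)/(a:ℚ) ≤ 1/4 := one_div_le_one_div_of_le (by norm_num) this
      subst hΦ; push_cast at hnn; linarith
    have hb3 : b = 3 := by
      by_contra h
      have : (4:ℚ) ≤ (b:ℚ) := by exact_mod_cast (by omega : 4 ≤ b)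
      have : (1:ℚ)/(b:ℚ) ≤ 1/4 := one_div_le_one_div_of_le (by norm_num) this
      subst hΦ; push_cast at hnn; linarith
    have hc3 : c = 3 := by
      by_contra h
      have : (4:ℚ) ≤ (c:ℚ) := by exact_mod_cast (by omega : 4 ≤ c)
      have : (1:ℚ)/(c:ℚ) ≤ 1/4 := one_div_le_one_div_of_le (by norm_num) this
      subst hΦ; push_cast at hnn; linarith
    subst ha3 hb3 hc3 hΦ
    norm_num
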